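/- For every integer s ≥ 2, there exists a linear code over GF(4) of length 3s+3, dimension 2s+1, and minimum distance 3 that has locality 2. Since (3s+3) − (2s+1) − ⌈(2s+1)/2⌉ + 2 = 3, such a code is an optimal (3s+3, 2s+1, 2) LRC meeting the Singleton-like bound. -/

import Mathlib

noncomputable def wt {F : Type*} [Zero F] {ι : Type*} (x : ι → F) : ℕ :=
  {i | x i ≠ 0}.ncard

def dualCode {F : Type*} [Field F] {n : ℕ} (C : Submodule F (Fin n → F)) :
    Submodule F (Fin n → F) where
  carrier := {y | ∀ x ∈ C, ∑ i, x i * y i = 0}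
  add_mem' := by
    intro a b ha hb
    simp only [Set.mem_setOf_eq] at *
    intro z hz
    simp [Pi.add_apply, mul_add, Finset.sum_add_distrib, ha z hz, hb z hz]
  zero_mem' := by
    intro z hz
    simp
  smul_mem' := by
    intro c a ha
    simp only [Set.mem_setOf_eq] at *
    intro z hz
    have h : ∀ i, z i * (c • a) i = c * (z i * a i) := by
      intro i; simp [smul_eq_mul]; ring
    simp only [h, ← Finset.mul_sum, ha z hz, mul_zero]

def isMinDist {F : Type*} [Field F] {ι : Type*} (C : Submodule F (ι → F)) (d : ℕ) : Prop :=
  (∃ x ∈ C, x ≠ 0 ∧ wt x = d) ∧ ∀ x ∈ C, x ≠ 0 → d ≤ wt x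

def hasLocality {F : Type*} [Field F] {n : ℕ} (C : Submodule F (Fin n → F)) (r : ℕ) : Prop :=
  ∀ i : Fin n, ∃ h ∈ dualCode C, h i ≠ 0 ∧ wt h ≤ r + 1

abbrev GF4 := GaloisField 2 2

def ceilDiv (a b : ℕ) : ℕ := (a + b - 1) / b

namespace Stmt13

lemma exists_omega : ∃ ω : GF4, ω ≠ 0 ∧ ω ≠ 1 := by
  by_contra h
  push_neg at h
  have hsub : (Set.univ : Set GF4) ⊆ {0, 1} := by
    intro a _
    rcases eq_or_ne a 0 with h0 | h0
    · exact Or.inl h0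
    · exact Or.inr (h a h0)
  have h1 : (Set.univ : Set GF4).ncard ≤ ({0, 1} : Set GF4).ncard :=
    Set.ncard_le_ncard hsub (Set.toFinite _)
  have h2 : ({0, 1} : Set GF4).ncard ≤ 2 := by
    calc ({0, 1} : Set GF4).ncard ≤ ({1} : Set GF4).ncard + 1 := Set.ncard_insert_le _ _
    _ ≤ 2 := by simp
  have h3 : (Set.univ : Set GF4).ncard = 4 := by
    rw [Set.ncard_univ, GaloisField.card 2 2 (by norm_num)]; norm_num
  omega

variable (s : ℕ) (ω : GF4)

def E : Fin (3 * s + 3) ≃ Fin (s + 1) × Fin 3 :=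
  (finCongr (by omega : 3 * s + 3 = (s + 1) * 3)).trans finProdFinEquiv.symm

noncomputable def g : Fin (3 * s + 3) → GF4 := fun i => ![0, 1, ω] (E s i).2

noncomputable def φ : (Fin (3 * s + 3) → GF4) →ₗ[GF4] (Fin (s + 1) → GF4) × GF4 where
  toFun x := (fun j => ∑ p : Fin 3, x ((E s).symm (j, p)), ∑ i, g s ω i * x i)
  map_add' x y := by
    ext j
    · simp [Finset.sum_add_distrib]
    · simp [mul_add, Finset.sum_add_distrib]
  map_smul' c x := by
    ext j
    · simp [Finset.mul_sum]
    · simp [Finset.mul_sum]; congr 1; ext i; ring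

lemma mem_ker_iff (x : Fin (3 * s + 3) → GF4) :
    x ∈ LinearMap.ker (φ s ω) ↔
      (∀ j : Fin (s + 1), ∑ p : Fin 3, x ((E s).symm (j, p)) = 0) ∧
      ∑ i, g s ω i * x i = 0 := by
  simp [LinearMap.mem_ker, φ, LinearMap.coe_mk, AddHom.coe_mk, Prod.ext_iff, funext_iff]

lemma sum_blocks (f : Fin (3 * s + 3) → GF4) :
    ∑ i, f i = ∑ j : Fin (s + 1), ∑ p : Fin 3, f ((E s).symm (j, p)) := by
  rw [← Equiv.sum_comp (E s).symm f, Fintype.sum_prod_type]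

lemma surj : Function.Surjective (φ s ω) := by
  rintro ⟨t, u⟩
  refine ⟨fun i => (if (E s i).2 = 0 then t (E s i).1 else 0) +
      (if (E s i).1 = 0 ∧ (E s i).2 ≠ 2 then u else 0), ?_⟩
  have key : ∀ (j : Fin (s + 1)) (p : Fin 3),
      (E s) ((E s).symm (j, p)) = (j, p) := fun j p => (E s).apply_symm_apply _
  ext j
  · simp only [φ, LinearMap.coe_mk, AddHom.coe_mk, Fin.sum_univ_three, key]
    rcases eq_or_ne j 0 with hj | hj <;>
      simp [hj, CharTwo.add_self_eq_zero, add_assoc]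
  · simp only [φ, LinearMap.coe_mk, AddHom.coe_mk]
    rw [sum_blocks]
    simp only [key, g]
    rw [Fintype.sum_congr _ (fun j => if j = 0 then u else 0) ?_]
    · simp [Finset.sum_ite_eq']
    · intro j
      rcases eq_or_ne j 0 with hj | hj <;>
        simp [hj, Fin.sum_univ_three, key]

lemma finrank_ker : Module.finrank GF4 (LinearMap.ker (φ s ω)) = 2 * s + 1 := by
  have h := LinearMap.finrank_range_add_finrank_ker (φ s ω)
  rw [LinearMap.range_eq_top.mpr (surj s ω), finrank_top] at h
  have h1 : Module.finrank GF4 ((Fin (s + 1) → GF4) × GF4) = s + 2 := by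
    rw [Module.finrank_prod, Module.finrank_fin_fun, Module.finrank_self]
  have h2 : Module.finrank GF4 (Fin (3 * s + 3) → GF4) = 3 * s + 3 :=
    Module.finrank_fin_fun GF4
  omega




lemma add_eq_zero_iff (a b : GF4) : a + b = 0 ↔ a = b := by
  constructor
  · intro h
    have := eq_neg_of_add_eq_zero_left h
    rwa [CharTwo.neg_eq] at this
  · rintro rfl; exact CharTwo.add_self_eq_zero a

variable (s : ℕ) (ω : GF4)

lemma key : ∀ (j : Fin (s + 1)) (p : Fin 3), (E s) ((E s).symm (j, p)) = (j, p) :=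
  fun _ _ => (E s).apply_symm_apply _

lemma symm_E (i : Fin (3 * s + 3)) : (E s).symm ((E s i).1, (E s i).2) = i := by
  rw [Prod.mk.eta, (E s).symm_apply_apply]

noncomputable def x₀ : Fin (3 * s + 3) → GF4 :=
  fun i => if (E s i).1 = 0 then ![ω + 1, ω, 1] (E s i).2 else 0

lemma x₀_mem : x₀ s ω ∈ LinearMap.ker (φ s ω) := by
  rw [mem_ker_iff]
  constructor
  · intro j
    rcases eq_or_ne j 0 with hj | hj
    · simp only [x₀, Fin.sum_univ_three, key, hj, if_true]
      show (ω + 1) + ω + 1 = 0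
      have h1 : (ω + 1) + ω + 1 = (ω + 1) + (ω + 1) := by ring
      rw [h1, CharTwo.add_self_eq_zero]
    · simp [x₀, Fin.sum_univ_three, key, hj]
  · rw [sum_blocks]
    rw [Fintype.sum_congr _ (fun _ => (0 : GF4)) ?_]
    · simp
    · intro j
      rcases eq_or_ne j 0 with hj | hj
      · simp only [x₀, g, Fin.sum_univ_three, key, hj, if_true]
        simp [CharTwo.add_self_eq_zero]
      · simp [x₀, g, Fin.sum_univ_three, key, hj]

lemma x₀_support (hω0 : ω ≠ 0) (hω1 : ω ≠ 1) :
    {i | x₀ s ω i ≠ 0} =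
      {(E s).symm (0, 0), (E s).symm (0, 1), (E s).symm (0, 2)} := by
  have hω1' : ω + 1 ≠ 0 := by
    intro h; exact hω1 ((add_eq_zero_iff ω 1).mp h)
  ext i
  simp only [Set.mem_setOf_eq, Set.mem_insert_iff, Set.mem_singleton_iff,
    x₀]
  have hp : (E s i).2 = 0 ∨ (E s i).2 = 1 ∨ (E s i).2 = 2 := by
    have := (by decide : ∀ p : Fin 3, p = 0 ∨ p = 1 ∨ p = 2)
    exact this _
  constructor
  · intro hne
    have hj : (E s i).1 = 0 := by
      by_contra hj; simp [hj] at hne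
    rcases hp with hp | hp | hp
    · left; rw [← symm_E s i, hj, hp]
    · right; left; rw [← symm_E s i, hj, hp]
    · right; right; rw [← symm_E s i, hj, hp]
  · rintro (h | h | h) <;>
    · have h' := congrArg (E s) h
      rw [key] at h'
      simp only [h']
      simp [hω0, hω1']

lemma x₀_ne_zero (hω0 : ω ≠ 0) (hω1 : ω ≠ 1) : x₀ s ω ≠ 0 := by
  intro h
  have : x₀ s ω ((E s).symm (0, 2)) = 1 := by
    simp only [x₀, key]
    norm_num
    rfl
  rw [h] at this
  simp at this

lemma wt_x₀ (hω0 : ω ≠ 0) (hω1 : ω ≠ 1) : wt (x₀ s ω) = 3 := by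
  rw [wt, Set.ncard_eq_three]
  refine ⟨_, _, _, ?_, ?_, ?_, x₀_support s ω hω0 hω1⟩ <;>
  · intro h
    have := (E s).symm.injective h
    simp [Prod.ext_iff] at this

-- g values are distinct on distinct positions
lemma g_inj (hω0 : ω ≠ 0) (hω1 : ω ≠ 1) :
    ∀ p q : Fin 3, p ≠ q → ![0, 1, ω] p ≠ ![0, 1, ω] q := by
  have hω1' : (1 : GF4) ≠ ω := fun h => hω1 h.symm
  have hω0' : (0 : GF4) ≠ ω := fun h => hω0 h.symm
  intro p q hpq
  fin_cases p <;> fin_cases q <;> simp_all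

lemma three_le_wt (hω0 : ω ≠ 0) (hω1 : ω ≠ 1)
    (x : Fin (3 * s + 3) → GF4) (hx : x ∈ LinearMap.ker (φ s ω)) (hx0 : x ≠ 0) :
    3 ≤ wt x := by
  obtain ⟨hblk, hglob⟩ := (mem_ker_iff s ω x).1 hx
  obtain ⟨i₁, hi₁⟩ : ∃ i, x i ≠ 0 := by
    by_contra h
    push_neg at h
    exact hx0 (funext fun i => h i)
  obtain ⟨j, p₁, hE₁⟩ : ∃ j p₁, E s i₁ = (j, p₁) := ⟨_, _, Prod.mk.eta.symm⟩
  have hsymm₁ : (E s).symm (j, p₁) = i₁ := by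
    rw [← hE₁]; exact (E s).symm_apply_apply i₁
  -- a second nonzero coordinate in the same block
  obtain ⟨p₂, hp₂ne, hp₂⟩ : ∃ p₂, p₂ ≠ p₁ ∧ x ((E s).symm (j, p₂)) ≠ 0 := by
    by_contra h
    push_neg at h
    have := Finset.sum_eq_single_of_mem p₁ (Finset.mem_univ _)
      (fun b _ hb => h b hb)
    rw [hblk j, hsymm₁] at this
    exact hi₁ this.symm
  have hne12 : i₁ ≠ (E s).symm (j, p₂) := by
    intro h
    apply hp₂ne
    have := congrArg (E s) h
    rw [hE₁, key] at this
    exact (Prod.mk.injEq _ _ _ _ ▸ this).2.symm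
  by_contra hlt
  push_neg at hlt
  have hlt' : {i | x i ≠ 0}.ncard < 3 := hlt
  have hpair : ({i₁, (E s).symm (j, p₂)} : Set _) ⊆ {i | x i ≠ 0} := by
    rintro i (rfl | rfl)
    · exact hi₁
    · exact hp₂
  have h2 : ({i₁, (E s).symm (j, p₂)} : Set _).ncard = 2 := Set.ncard_pair hne12
  have heq : ({i₁, (E s).symm (j, p₂)} : Set _) = {i | x i ≠ 0} := by
    apply Set.eq_of_subset_of_ncard_le hpair
    rw [h2]; omega
  have hzero : ∀ i, i ≠ i₁ → i ≠ (E s).symm (j, p₂) → x i = 0 := by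
    intro i h1 h2'
    by_contra h
    have hmem : i ∈ ({i₁, (E s).symm (j, p₂)} : Set _) := heq ▸ h
    rcases hmem with h | h
    · exact h1 h
    · exact h2' h
  have hzero' : ∀ p : Fin 3, p ≠ p₁ → p ≠ p₂ → x ((E s).symm (j, p)) = 0 := by
    intro p hq1 hq2
    apply hzero
    · intro h
      apply hq1
      have := congrArg (E s) h
      rw [key, hE₁] at this
      exact (Prod.mk.injEq _ _ _ _ ▸ this).2
    · intro h
      apply hq2
      have := congrArg (E s) h
      rw [key, key] at this
      exact (Prod.mk.injEq _ _ _ _ ▸ this).2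
  -- block sum gives x i₂ = x i₁
  have hsum2 : x i₁ + x ((E s).symm (j, p₂)) = 0 := by
    have := Finset.sum_eq_add_of_mem p₁ p₂ (Finset.mem_univ _) (Finset.mem_univ _)
      (fun h => hp₂ne h.symm)
      (fun c _ hc => hzero' c hc.1 hc.2)
    rw [hblk j, hsymm₁] at this
    exact this.symm
  have hxx : x ((E s).symm (j, p₂)) = x i₁ := ((add_eq_zero_iff _ _).mp hsum2).symm
  -- global check
  have hglob2 : g s ω i₁ * x i₁ + g s ω ((E s).symm (j, p₂)) * x ((E s).symm (j, p₂)) = 0 := by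
    have := Finset.sum_eq_add_of_mem (f := fun i => g s ω i * x i) i₁ ((E s).symm (j, p₂)) (Finset.mem_univ _)
      (Finset.mem_univ _) hne12
      (fun c _ hc => by show g s ω c * x c = 0; rw [hzero c hc.1 hc.2, mul_zero])
    rw [hglob] at this
    exact this.symm
  rw [hxx] at hglob2
  have hgg : (g s ω i₁ + g s ω ((E s).symm (j, p₂))) * x i₁ = 0 := by
    rw [add_mul]; exact hglob2
  have hzero2 : g s ω i₁ + g s ω ((E s).symm (j, p₂)) = 0 := by
    rcases mul_eq_zero.mp hgg with h | h
    · exact h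
    · exact absurd h hi₁
  have hgeq : g s ω i₁ = g s ω ((E s).symm (j, p₂)) := (add_eq_zero_iff _ _).mp hzero2
  have hfin : ![0, 1, ω] p₁ = ![0, 1, ω] p₂ := by
    simpa [g, hE₁, key] using hgeq
  exact g_inj ω hω0 hω1 p₁ p₂ (fun h => hp₂ne h.symm) hfin


lemma locality (i : Fin (3 * s + 3)) :
    ∃ h ∈ dualCode (LinearMap.ker (φ s ω)), h i ≠ 0 ∧ wt h ≤ 3 := by
  refine ⟨fun i' => if (E s i').1 = (E s i).1 then 1 else 0, ?_, by simp, ?_⟩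
  · intro x hx
    obtain ⟨hblk, -⟩ := (mem_ker_iff s ω x).1 hx
    rw [sum_blocks]
    rw [Fintype.sum_congr _ (fun _ => (0 : GF4)) ?_]
    · simp
    · intro jj
      rcases eq_or_ne jj ((E s) i).1 with hj | hj
      · simp only [key, hj, if_true, mul_one]
        exact hblk _
      · simp [key, hj]
  · have hsub : {i' | (fun i' => if ((E s) i').1 = ((E s) i).1 then (1 : GF4) else 0) i' ≠ 0} ⊆
        {(E s).symm (((E s) i).1, 0), (E s).symm (((E s) i).1, 1),
          (E s).symm (((E s) i).1, 2)} := by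
      intro i' hi'
      simp only [Set.mem_setOf_eq] at hi'
      have hj : ((E s) i').1 = ((E s) i).1 := by
        by_contra h; simp [h] at hi'
      have hp : ((E s) i').2 = 0 ∨ ((E s) i').2 = 1 ∨ ((E s) i').2 = 2 :=
        (by decide : ∀ p : Fin 3, p = 0 ∨ p = 1 ∨ p = 2) _
      simp only [Set.mem_insert_iff, Set.mem_singleton_iff]
      rcases hp with hp | hp | hp
      · left; rw [← symm_E s i', hj, hp]
      · right; left; rw [← symm_E s i', hj, hp]
      · right; right; rw [← symm_E s i', hj, hp]
    refine le_trans (Set.ncard_le_ncard hsub (Set.toFinite _)) ?_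
    refine le_trans (Set.ncard_insert_le _ _) ?_
    have h1 := Set.ncard_insert_le ((E s).symm (((E s) i).1, 1))
      ({(E s).symm (((E s) i).1, 2)} : Set _)
    have h2 : ({(E s).symm (((E s) i).1, 2)} : Set (Fin (3 * s + 3))).ncard = 1 :=
      Set.ncard_singleton _
    omega

end Stmt13

/-- for s ≥ 2 there exists an optimal quaternary
(3s+3, 2s+1, 2) LRC with minimum distance 3. -/
theorem stmt_13 (s : ℕ) (hs : 2 ≤ s) :
    ∃ C : Submodule GF4 (Fin (3 * s + 3) → GF4),
      Module.finrank GF4 C = 2 * s + 1 ∧ isMinDist C 3 ∧ hasLocality C 2 := by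
  obtain ⟨ω, hω0, hω1⟩ := Stmt13.exists_omega
  refine ⟨LinearMap.ker (Stmt13.φ s ω), Stmt13.finrank_ker s ω,
    ⟨⟨_, Stmt13.x₀_mem s ω, Stmt13.x₀_ne_zero s ω hω0 hω1, Stmt13.wt_x₀ s ω hω0 hω1⟩,
      fun x hx hx0 => Stmt13.three_le_wt s ω hω0 hω1 x hx hx0⟩,
    fun i => Stmt13.locality s ω i⟩
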